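/- Let B^H be a fractional Brownian motion with Hurst index H ∈ (1/2,1) on [0,T], partition mesh δ = T/N, and ΔB^H_k = B^H_{ν_{k+1}} - B^H_{ν_k}. Then for any M > 0 and all N large enough (so that 2MT^{2H}N^{1-2H} < 1), E[exp(M·Σ_{k=0}^{N-1}(ΔB^H_k)²)] ≤ (1 - 2MT^{2H}N^{1-2H})^{-1/2}. -/

import Mathlib

open MeasureTheory ProbabilityTheory Real

lemma gauss_exp_sq_lintegral (v : NNReal) (hv : 0 < (v : ℝ)) (c : ℝ)
    (h : 2 * c * (v : ℝ) < 1) :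
    ∫⁻ x, ENNReal.ofReal (Real.exp (c * x ^ 2)) ∂(gaussianReal 0 v)
      = ENNReal.ofReal ((1 - 2 * c * (v : ℝ)) ^ (-(1 : ℝ) / 2)) := by
  have hvne : v ≠ 0 := by
    intro h0; rw [h0] at hv; simp at hv
  set b : ℝ := 1 / (2 * (v : ℝ)) - c with hbdef
  have hbpos : 0 < b := by
    have : c < 1 / (2 * (v : ℝ)) := (lt_div_iff₀ (by positivity)).mpr (by linarith)
    simp only [hbdef]; linarith
  have hA : 0 < 1 - 2 * c * (v : ℝ) := by linarith
  have h2vb : 2 * (v : ℝ) * b = 1 - 2 * c * (v : ℝ) := by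
    rw [hbdef, mul_sub, mul_one_div_cancel (by positivity)]; ring
  rw [gaussianReal_of_var_ne_zero _ hvne,
    lintegral_withDensity_eq_lintegral_mul _ (measurable_gaussianPDF 0 v)
      (by fun_prop)]
  have hfun : ∀ x : ℝ, (gaussianPDF 0 v * fun x => ENNReal.ofReal (Real.exp (c * x ^ 2))) x
      = ENNReal.ofReal ((√(2 * π * (v : ℝ)))⁻¹ * Real.exp (-b * x ^ 2)) := by
    intro x
    simp only [Pi.mul_apply, gaussianPDF, gaussianPDFReal]
    rw [← ENNReal.ofReal_mul (by positivity)]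
    congr 1
    rw [mul_assoc, ← Real.exp_add]
    congr 2
    field_simp [hbdef]
    linear_combination x ^ 2 * h2vb
  simp only [hfun]
  rw [← ofReal_integral_eq_lintegral_ofReal
      ((integrable_exp_neg_mul_sq hbpos).const_mul _)
      (Filter.Eventually.of_forall fun x => by positivity),
    integral_const_mul, integral_gaussian]
  congr 1
  rw [neg_div, Real.rpow_neg hA.le, ← Real.sqrt_eq_rpow, ← Real.sqrt_inv,
    ← Real.sqrt_inv, ← Real.sqrt_mul (by positivity)]
  congr 1
  rw [← h2vb]
  field_simp

/-- The increments `ΔB k` of a fractional Brownian motion with Hurst index `H ∈ (1/2,1)`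
over a uniform partition of `[0,T]` with mesh `δ = T/N` are centered Gaussians with
variance `δ^(2H)` (they are not independent). -/
theorem fbm_increments_exp_sq_sum {Ω : Type*} [MeasureSpace Ω] [IsProbabilityMeasure (ℙ : Measure Ω)]
    (T H : ℝ) (hT : 0 < T) (hH : 1 / 2 < H) (hH1 : H < 1)
    (N : ℕ) (hN : 0 < N) (M : ℝ) (hM : 0 < M)
    (h2M : 2 * M * T ^ (2 * H) * (N : ℝ) ^ (1 - 2 * H) < 1)
    (v : NNReal) (hv : (v : ℝ) = (T / N) ^ (2 * H))
    (ΔB : Fin N → Ω → ℝ) (hmeas : ∀ k, Measurable (ΔB k))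
    (hlaw : ∀ k, Measure.map (ΔB k) ℙ = gaussianReal 0 v) :
    ∫ ω, Real.exp (M * ∑ k, (ΔB k ω) ^ 2) ≤
      (1 - 2 * M * T ^ (2 * H) * (N : ℝ) ^ (1 - 2 * H)) ^ (-(1 : ℝ) / 2) := by
  have hNpos : (0 : ℝ) < N := Nat.cast_pos.mpr hN
  set c : ℝ := (N : ℝ) * M with hc
  have hvpos : 0 < (v : ℝ) := by rw [hv]; positivity
  have hkey : 2 * c * (v : ℝ) = 2 * M * T ^ (2 * H) * (N : ℝ) ^ (1 - 2 * H) := by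
    rw [hv, Real.div_rpow hT.le (Nat.cast_nonneg N), Real.rpow_sub hNpos, Real.rpow_one]
    field_simp [hc]
    ring
  have h2cv : 2 * c * (v : ℝ) < 1 := by rw [hkey]; exact h2M
  have hApos : 0 < 1 - 2 * M * T ^ (2 * H) * (N : ℝ) ^ (1 - 2 * H) := by linarith [hkey ▸ h2cv]
  have hRpos : (0 : ℝ) ≤ (1 - 2 * M * T ^ (2 * H) * (N : ℝ) ^ (1 - 2 * H)) ^ (-(1 : ℝ) / 2) := by
    positivity
  -- rewrite integral as lintegral
  have hmeasS : Measurable fun ω => Real.exp (M * ∑ k, (ΔB k ω) ^ 2) := by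
    apply Measurable.exp
    exact (Finset.measurable_sum _ fun k _ => (hmeas k).pow_const 2).const_mul M
  rw [integral_eq_lintegral_of_nonneg_ae
      (Filter.Eventually.of_forall fun ω => (Real.exp_pos _).le)
      hmeasS.aestronglyMeasurable]
  refine ENNReal.toReal_le_of_le_ofReal hRpos ?_
  -- pointwise rewriting as a product
  have hpoint : ∀ ω, ENNReal.ofReal (Real.exp (M * ∑ k, (ΔB k ω) ^ 2))
      = ∏ k : Fin N, (ENNReal.ofReal (Real.exp (c * (ΔB k ω) ^ 2))) ^ ((1 : ℝ) / N) := by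
    intro ω
    have : ∀ k : Fin N, (ENNReal.ofReal (Real.exp (c * (ΔB k ω) ^ 2))) ^ ((1 : ℝ) / N)
        = ENNReal.ofReal (Real.exp (M * (ΔB k ω) ^ 2)) := by
      intro k
      rw [ENNReal.ofReal_rpow_of_pos (Real.exp_pos _)]
      congr 1
      rw [Real.rpow_def_of_pos (Real.exp_pos _), Real.log_exp]
      congr 1
      field_simp [hc]
      ring
    simp only [this]
    rw [← ENNReal.ofReal_prod_of_nonneg (fun k _ => (Real.exp_pos _).le), ← Real.exp_sum,
      Finset.mul_sum]
  simp only [hpoint]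
  -- Hölder
  have hHolder := ENNReal.lintegral_prod_norm_pow_le (μ := (ℙ : Measure Ω)) Finset.univ
    (f := fun k ω => ENNReal.ofReal (Real.exp (c * (ΔB k ω) ^ 2)))
    (fun k _ => (((hmeas k).pow_const 2).const_mul c).exp.ennreal_ofReal.aemeasurable)
    (p := fun _ => (1 : ℝ) / N)
    (by simp [Finset.card_univ, mul_one_div]; exact mul_inv_cancel₀ hNpos.ne')
    (fun k _ => by positivity)
  refine hHolder.trans ?_
  have hlint : ∀ k : Fin N, ∫⁻ ω, ENNReal.ofReal (Real.exp (c * (ΔB k ω) ^ 2)) ∂ℙ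
      = ENNReal.ofReal ((1 - 2 * M * T ^ (2 * H) * (N : ℝ) ^ (1 - 2 * H)) ^ (-(1 : ℝ) / 2)) := by
    intro k
    rw [← hkey, ← gauss_exp_sq_lintegral v hvpos c h2cv, ← hlaw k,
      lintegral_map (by fun_prop) (hmeas k)]
  simp only [hlint]
  rw [Finset.prod_const, Finset.card_univ, Fintype.card_fin, ← ENNReal.rpow_natCast,
    ← ENNReal.rpow_mul, one_div, inv_mul_cancel₀ hNpos.ne', ENNReal.rpow_one]
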